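/- Let k > 0, and let L and U be independent random variables with L uniformly distributed on [k, 2k] and U uniformly distributed on [0, 1]. Then the probability of the event { U · L / 2 + k ≤ L } is at least 1/2. (Equivalently, (1/k) · ∫_{k}^{2k} 2(ℓ − k)/ℓ dℓ = 2 − 2 ln 2 ≥ 1/2.) -/

import Mathlib

open MeasureTheory ProbabilityTheory
open scoped ENNReal

/-- If `L` and `U` are independent random variables, `L` uniformly distributed on
`[k, 2k]` (for `k > 0`) and `U` uniformly distributed on `[0, 1]`, then the
probability of the event `{U · L / 2 + k ≤ L}` is at least `1/2`. -/
theorem stmt14 (k : ℝ) (hk : 0 < k)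
    {Ω : Type*} [MeasurableSpace Ω] (μ : Measure Ω) [IsProbabilityMeasure μ]
    (L U : Ω → ℝ)
    (hLlaw : μ.map L = ENNReal.ofReal (1 / k) • volume.restrict (Set.Icc k (2 * k)))
    (hUlaw : μ.map U = volume.restrict (Set.Icc 0 1))
    (hindep : IndepFun L U μ) :
    (1 / 2 : ℝ≥0∞) ≤ μ {ω | U ω * L ω / 2 + k ≤ L ω} := by
  -- L and U are a.e. measurable, since their laws are nonzero
  have hL : AEMeasurable L μ := by
    by_contra h
    rw [Measure.map_of_not_aemeasurable h] at hLlaw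
    have := congrArg (fun ν : Measure ℝ => ν (Set.Icc k (2 * k))) hLlaw
    simp only [Measure.coe_zero, Pi.zero_apply, Measure.smul_apply, smul_eq_mul,
      Measure.restrict_apply_self, Real.volume_Icc] at this
    have h1 : (ENNReal.ofReal (1 / k)) ≠ 0 := by
      simp [ENNReal.ofReal_eq_zero, not_le, hk]
    have h2 : ENNReal.ofReal (2 * k - k) ≠ 0 := by
      simp only [ne_eq, ENNReal.ofReal_eq_zero, not_le]; linarith
    exact (mul_ne_zero h1 h2) this.symm
  have hU : AEMeasurable U μ := by
    by_contra h
    rw [Measure.map_of_not_aemeasurable h] at hUlaw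
    have := congrArg (fun ν : Measure ℝ => ν (Set.Icc 0 1)) hUlaw
    simp only [Measure.coe_zero, Pi.zero_apply, Measure.restrict_apply_self,
      Real.volume_Icc] at this
    norm_num at this
  set L' := hL.mk L with hL'def
  set U' := hU.mk U with hU'def
  have hL'm : Measurable L' := hL.measurable_mk
  have hU'm : Measurable U' := hU.measurable_mk
  have hLae : L =ᵐ[μ] L' := hL.ae_eq_mk
  have hUae : U =ᵐ[μ] U' := hU.ae_eq_mk
  have hLlaw' : μ.map L' = ENNReal.ofReal (1 / k) • volume.restrict (Set.Icc k (2 * k)) := by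
    rw [← Measure.map_congr hLae]; exact hLlaw
  have hUlaw' : μ.map U' = volume.restrict (Set.Icc 0 1) := by
    rw [← Measure.map_congr hUae]; exact hUlaw
  have hindep' : IndepFun L' U' μ := hindep.congr hLae hUae
  -- the event with respect to the measurable representatives
  set E' : Set Ω := {ω | U' ω * L' ω / 2 + k ≤ L' ω} with hE'def
  have hEeq : μ {ω | U ω * L ω / 2 + k ≤ L ω} = μ E' := by
    apply measure_congr
    rw [Filter.eventuallyEq_set]
    filter_upwards [hLae, hUae] with ω h1 h2
    simp only [Set.mem_setOf_eq, h1, h2, hE'def]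
  rw [hEeq]
  -- good rectangles
  have hsub : ∀ a b c : ℝ, 0 ≤ a → b ≤ 2 → 2 * k ≤ c * (2 - b) →
      U' ⁻¹' Set.Ico a b ∩ L' ⁻¹' Set.Ici c ⊆ E' := by
    intro a b c ha hb hbc ω hω
    obtain ⟨⟨hua, hub⟩, hlc⟩ := hω
    simp only [hE'def, Set.mem_setOf_eq]
    have hc0 : 0 ≤ c := by nlinarith
    have hL0 : 0 ≤ L' ω := le_trans hc0 hlc
    nlinarith [mul_le_mul_of_nonneg_right (le_of_lt hub) hL0,
      mul_le_mul_of_nonneg_left hlc (sub_nonneg.2 hb),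
      mul_le_mul_of_nonneg_right (le_trans ha hua) hL0]
  -- measures of the marginal sets
  have hUmeas : ∀ a b : ℝ, 0 ≤ a → b ≤ 1 → μ (U' ⁻¹' Set.Ico a b) = ENNReal.ofReal (b - a) := by
    intro a b ha hb
    rw [← Measure.map_apply hU'm measurableSet_Ico, hUlaw',
      Measure.restrict_apply measurableSet_Ico]
    have : Set.Ico a b ∩ Set.Icc 0 1 = Set.Ico a b :=
      Set.inter_eq_self_of_subset_left
        (fun x hx => ⟨le_trans ha hx.1, le_of_lt (lt_of_lt_of_le hx.2 hb)⟩)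
    rw [this, Real.volume_Ico]
  have hLmeas : ∀ c : ℝ, k ≤ c → μ (L' ⁻¹' Set.Ici c) = ENNReal.ofReal ((2 * k - c) / k) := by
    intro c hc
    have hset : Set.Ici c ∩ Set.Icc k (2 * k) = Set.Icc c (2 * k) := by
      ext x
      simp only [Set.mem_inter_iff, Set.mem_Ici, Set.mem_Icc]
      exact ⟨fun h => ⟨h.1, h.2.2⟩, fun h => ⟨h.1, le_trans hc h.1, h.2⟩⟩
    rw [← Measure.map_apply hL'm measurableSet_Ici, hLlaw', Measure.smul_apply,
      Measure.restrict_apply measurableSet_Ici, hset,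
      Real.volume_Icc, smul_eq_mul, ← ENNReal.ofReal_mul (by positivity)]
    congr 1
    field_simp
  -- measure of a rectangle
  have hrect : ∀ a b c : ℝ, 0 ≤ a → b ≤ 1 → k ≤ c →
      μ (U' ⁻¹' Set.Ico a b ∩ L' ⁻¹' Set.Ici c)
        = ENNReal.ofReal (b - a) * ENNReal.ofReal ((2 * k - c) / k) := by
    intro a b c ha hb hc
    rw [hindep'.symm.measure_inter_preimage_eq_mul _ _ measurableSet_Ico measurableSet_Ici,
      hUmeas a b ha hb, hLmeas c hc]
  -- the four rectangles
  set A0 := U' ⁻¹' Set.Ico (0 : ℝ) (1/5) ∩ L' ⁻¹' Set.Ici (10 * k / 9) with hA0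
  set A1 := U' ⁻¹' Set.Ico (1/5 : ℝ) (2/5) ∩ L' ⁻¹' Set.Ici (5 * k / 4) with hA1
  set A2 := U' ⁻¹' Set.Ico (2/5 : ℝ) (3/5) ∩ L' ⁻¹' Set.Ici (10 * k / 7) with hA2
  set A3 := U' ⁻¹' Set.Ico (3/5 : ℝ) (4/5) ∩ L' ⁻¹' Set.Ici (5 * k / 3) with hA3
  have hdisjU : ∀ a b a' b' c c' : ℝ, b ≤ a' →
      Disjoint (U' ⁻¹' Set.Ico a b ∩ L' ⁻¹' Set.Ici c)
        (U' ⁻¹' Set.Ico a' b' ∩ L' ⁻¹' Set.Ici c') := by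
    intro a b a' b' c c' hba'
    refine Disjoint.mono Set.inter_subset_left Set.inter_subset_left ?_
    exact Disjoint.preimage U' (Set.Ico_disjoint_Ico.2 (le_trans (min_le_left _ _)
      (le_trans hba' (le_max_right _ _))))
  have hAmeas : ∀ (a b c : ℝ), MeasurableSet (U' ⁻¹' Set.Ico a b ∩ L' ⁻¹' Set.Ici c) :=
    fun a b c => (hU'm measurableSet_Ico).inter (hL'm measurableSet_Ici)
  have hunion : A0 ∪ A1 ∪ A2 ∪ A3 ⊆ E' := by
    refine Set.union_subset (Set.union_subset (Set.union_subset ?_ ?_) ?_) ?_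
    · exact hsub 0 (1/5) (10 * k / 9) (by norm_num) (by norm_num) (by nlinarith)
    · exact hsub (1/5) (2/5) (5 * k / 4) (by norm_num) (by norm_num) (by nlinarith)
    · exact hsub (2/5) (3/5) (10 * k / 7) (by norm_num) (by norm_num) (by nlinarith)
    · exact hsub (3/5) (4/5) (5 * k / 3) (by norm_num) (by norm_num) (by nlinarith)
  have hmU : μ (A0 ∪ A1 ∪ A2 ∪ A3) = μ A0 + μ A1 + μ A2 + μ A3 := by
    rw [measure_union (by
        refine Set.disjoint_union_left.2 ⟨Set.disjoint_union_left.2 ⟨?_, ?_⟩, ?_⟩ <;>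
          exact hdisjU _ _ _ _ _ _ (by norm_num)) (hAmeas _ _ _),
      measure_union (by
        refine Set.disjoint_union_left.2 ⟨?_, ?_⟩ <;>
          exact hdisjU _ _ _ _ _ _ (by norm_num)) (hAmeas _ _ _),
      measure_union (hdisjU _ _ _ _ _ _ (by norm_num)) (hAmeas _ _ _)]
  have h0 : μ A0 = ENNReal.ofReal (1/5) * ENNReal.ofReal (8/9) := by
    rw [hA0, hrect 0 (1/5) (10 * k / 9) (by norm_num) (by norm_num) (by nlinarith)]
    congr 1
    · norm_num
    · congr 1; field_simp; ring
  have h1 : μ A1 = ENNReal.ofReal (1/5) * ENNReal.ofReal (3/4) := by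
    rw [hA1, hrect (1/5) (2/5) (5 * k / 4) (by norm_num) (by norm_num) (by nlinarith)]
    congr 1
    · norm_num
    · congr 1; field_simp; ring
  have h2 : μ A2 = ENNReal.ofReal (1/5) * ENNReal.ofReal (4/7) := by
    rw [hA2, hrect (2/5) (3/5) (10 * k / 7) (by norm_num) (by norm_num) (by nlinarith)]
    congr 1
    · norm_num
    · congr 1; field_simp; ring
  have h3 : μ A3 = ENNReal.ofReal (1/5) * ENNReal.ofReal (1/3) := by
    rw [hA3, hrect (3/5) (4/5) (5 * k / 3) (by norm_num) (by norm_num) (by nlinarith)]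
    congr 1
    · norm_num
    · congr 1; field_simp; ring
  calc (1 / 2 : ℝ≥0∞) ≤ μ (A0 ∪ A1 ∪ A2 ∪ A3) := by
        rw [hmU, h0, h1, h2, h3, ← ENNReal.ofReal_mul (by norm_num),
          ← ENNReal.ofReal_mul (by norm_num), ← ENNReal.ofReal_mul (by norm_num),
          ← ENNReal.ofReal_mul (by norm_num), ← ENNReal.ofReal_add (by norm_num) (by norm_num),
          ← ENNReal.ofReal_add (by norm_num) (by norm_num),
          ← ENNReal.ofReal_add (by norm_num) (by norm_num)]
        rw [ENNReal.le_ofReal_iff_toReal_le (by norm_num) (by norm_num)]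
        norm_num [ENNReal.toReal_div]
    _ ≤ μ E' := measure_mono hunion
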